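/- Let d and c be positive integers with c ≤ 2^{d−2}. Then W(2^{d−1}−c) ≥ (2^d−1)/d − c/(d − log₂ c), where W(m) = ∑_{R ∈ R(m)} 1/(|R|+1) and R(m) is the family of the first m finite subsets of ℕ⁺ in colexicographic order. -/

import Mathlib

open Finset

/-- The `k`-th finite subset of `ℕ⁺` in colexicographic order (zero-indexed):
its elements are the positions (shifted by one) of the binary digits of `k`. -/
def decodeSet (k : ℕ) : Finset ℕ :=
  ((Finset.range (k + 1)).filter (fun i => k.testBit i)).image (· + 1)

/-- `Rfam m`: the family of the first `m` finite subsets of `ℕ⁺` in colexicographic order. -/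
def Rfam (m : ℕ) : Finset (Finset ℕ) :=
  (Finset.range m).image decodeSet

/-- `W(m) = ∑_{R ∈ R(m)} 1/(|R|+1)`. -/
noncomputable def Wfun (m : ℕ) : ℝ :=
  ∑ R ∈ Rfam m, 1 / (R.card + 1)

lemma mem_bitIndices_iff {n i : ℕ} : i ∈ n.bitIndices ↔ n.testBit i = true := by
  induction n using Nat.binaryRec generalizing i with
  | zero => simp
  | bit b n ih =>
    cases b with
    | false =>
      rw [Nat.bitIndices_bit_false]
      cases i with
      | zero => rw [Nat.testBit_bit_zero]; simp
      | succ i => rw [Nat.testBit_bit_succ, ← ih]; simp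
    | true =>
      rw [Nat.bitIndices_bit_true]
      cases i with
      | zero => rw [Nat.testBit_bit_zero]; simp
      | succ i => rw [Nat.testBit_bit_succ, ← ih]; simp

/-- The set of bit positions of `k`. -/
def bset (k : ℕ) : Finset ℕ := k.bitIndices.toFinset

lemma mem_bset {k i : ℕ} : i ∈ bset k ↔ k.testBit i = true := by
  simp [bset, List.mem_toFinset, mem_bitIndices_iff]

lemma lt_succ_of_testBit {k i : ℕ} (h : k.testBit i = true) : i < k + 1 := by
  have h1 : 2 ^ i ≤ k := Nat.two_pow_le_of_mem_bitIndices (mem_bitIndices_iff.2 h)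
  have h2 : i < 2 ^ i := Nat.lt_two_pow_self
  omega

lemma decodeSet_eq (k : ℕ) : decodeSet k = (bset k).image (· + 1) := by
  ext a
  simp only [decodeSet, mem_image, mem_filter, mem_range, mem_bset]
  constructor
  · rintro ⟨i, ⟨_, h⟩, rfl⟩; exact ⟨i, h, rfl⟩
  · rintro ⟨i, h, rfl⟩; exact ⟨i, ⟨lt_succ_of_testBit h, h⟩, rfl⟩

lemma bset_sum (k : ℕ) : ∑ i ∈ bset k, 2 ^ i = k := Finset.twoPowSum_toFinset_bitIndices k

lemma bset_injective : Function.Injective bset :=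
  Function.LeftInverse.injective (g := fun S => ∑ i ∈ S, 2 ^ i) bset_sum

lemma decodeSet_injective : Function.Injective decodeSet := by
  intro a b h
  rw [decodeSet_eq, decodeSet_eq] at h
  exact bset_injective ((Finset.image_injective (add_left_injective 1)) h)

lemma card_decodeSet (k : ℕ) : (decodeSet k).card = (bset k).card := by
  rw [decodeSet_eq, Finset.card_image_of_injective _ (add_left_injective 1)]

lemma Wfun_eq (m : ℕ) : Wfun m = ∑ k ∈ range m, 1 / ((bset k).card + 1 : ℝ) := by
  rw [Wfun, Rfam, Finset.sum_image (fun a _ b _ h => decodeSet_injective h)]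
  exact Finset.sum_congr rfl fun k _ => by rw [card_decodeSet]

lemma geomSumTwo (n : ℕ) : ∑ i ∈ range n, 2 ^ i = 2 ^ n - 1 := by
  induction n with
  | zero => simp
  | succ n ih =>
    rw [Finset.sum_range_succ, ih]
    have h : (2:ℕ) ^ (n+1) = 2 ^ n * 2 := pow_succ 2 n
    have h1 : 1 ≤ (2:ℕ) ^ n := Nat.one_le_two_pow
    omega

lemma two_pow_card_le' (S : Finset ℕ) : 2 ^ S.card ≤ (∑ i ∈ S, 2 ^ i) + 1 := by
  induction S using Finset.induction_on_max with
  | empty => simp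
  | insert a S ha ih =>
    have hna : a ∉ S := fun h => lt_irrefl a (ha a h)
    rw [Finset.card_insert_of_notMem hna, Finset.sum_insert hna]
    have hS : ∑ i ∈ S, 2 ^ i ≤ 2 ^ a - 1 := by
      calc ∑ i ∈ S, 2^i ≤ ∑ i ∈ range a, 2^i :=
            Finset.sum_le_sum_of_subset (fun i hi => Finset.mem_range.2 (ha i hi))
        _ = 2^a - 1 := geomSumTwo a
    have h1 : (1:ℕ) ≤ 2 ^ a := Nat.one_le_two_pow
    have h2 : 2 ^ (S.card + 1) = 2 * 2 ^ S.card := by ring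
    omega

lemma sum_choose_succ (n : ℕ) :
    ∑ j ∈ range (n + 1), (n+1).choose (j+1) = 2 ^ (n+1) - 1 := by
  have h := Nat.sum_range_choose (n+1)
  rw [Finset.sum_range_succ'] at h
  simp only [Nat.choose_zero_right] at h
  omega

lemma choose_sum_real (n : ℕ) :
    ∑ j ∈ range (n + 1), (n.choose j : ℝ) / (j + 1) = (2 ^ (n + 1) - 1) / (n + 1) := by
  have key : ∀ j : ℕ, (n.choose j : ℝ) / (j + 1) = ((n+1).choose (j+1) : ℝ) / (n + 1) := by
    intro j
    rw [div_eq_div_iff (by positivity) (by positivity)]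
    have hn : n.choose j * (n+1) = (n+1).choose (j+1) * (j+1) := by
      rw [mul_comm]; exact Nat.add_one_mul_choose_eq n j
    exact_mod_cast hn
  rw [Finset.sum_congr rfl (fun j _ => key j), ← Finset.sum_div]
  congr 1
  have h := sum_choose_succ n
  have h1 : 1 ≤ (2:ℕ) ^ (n+1) := Nat.one_le_two_pow
  calc ∑ i ∈ range (n + 1), (((n + 1).choose (i + 1) : ℕ) : ℝ)
      = ((∑ j ∈ range (n + 1), (n+1).choose (j+1) : ℕ) : ℝ) := by push_cast; rfl
    _ = (2 ^ (n + 1) - 1 : ℝ) := by rw [h]; push_cast [h1]; ring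

lemma bset_subset_range {n k : ℕ} (hk : k < 2 ^ n) : bset k ⊆ range n := by
  intro i hi
  rw [mem_bset] at hi
  have h1 : 2 ^ i ≤ k := Nat.two_pow_le_of_mem_bitIndices (mem_bitIndices_iff.2 hi)
  rw [Finset.mem_range]
  exact (Nat.pow_lt_pow_iff_right one_lt_two).1 (lt_of_le_of_lt h1 hk)

lemma sum_bset_eq (n : ℕ) (f : ℕ → ℝ) :
    ∑ k ∈ range (2 ^ n), f (bset k).card = ∑ S ∈ (range n).powerset, f S.card := by
  apply Finset.sum_nbij' (i := fun k => bset k) (j := fun S => ∑ i ∈ S, 2 ^ i)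
  · intro k hk
    rw [Finset.mem_powerset]
    exact bset_subset_range (Finset.mem_range.1 hk)
  · intro S hS
    rw [Finset.mem_range]
    have h1 : 1 ≤ (2:ℕ) ^ n := Nat.one_le_two_pow
    calc ∑ i ∈ S, 2^i ≤ ∑ i ∈ range n, 2^i :=
          Finset.sum_le_sum_of_subset (Finset.mem_powerset.1 hS)
      _ = 2^n - 1 := geomSumTwo n
      _ < 2^n := by omega
  · intro k _; exact bset_sum k
  · intro S _; exact Finset.toFinset_bitIndices_twoPowSum S
  · intro k _; rfl

lemma Wfun_two_pow (n : ℕ) : Wfun (2 ^ n) = (2 ^ (n + 1) - 1) / (n + 1 : ℝ) := by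
  rw [Wfun_eq]
  have h := sum_bset_eq n (fun c => 1 / ((c : ℝ) + 1))
  rw [h, Finset.sum_powerset_apply_card (fun j : ℕ => 1 / ((j : ℝ) + 1)), Finset.card_range]
  have : ∀ j ∈ range (n+1), (n.choose j) • (1 / ((j:ℝ) + 1)) = (n.choose j : ℝ) / (j + 1) := by
    intro j _
    rw [nsmul_eq_mul, mul_one_div]
  rw [Finset.sum_congr rfl this, choose_sum_real]

lemma bset_compl {n k : ℕ} (hk : k < 2 ^ n) :
    bset (2 ^ n - 1 - k) = range n \ bset k := by
  have h : 2 ^ n - 1 - k = 2 ^ n - (k + 1) := by omega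
  ext i
  rw [h, Finset.mem_sdiff, Finset.mem_range, mem_bset, mem_bset,
    Nat.testBit_two_pow_sub_succ hk]
  simp

lemma card_bset_compl {n k : ℕ} (hk : k < 2 ^ n) :
    (bset (2 ^ n - 1 - k)).card = n - (bset k).card := by
  rw [bset_compl hk, Finset.card_sdiff_of_subset (bset_subset_range hk), Finset.card_range]

lemma card_bset_le_logb {j c : ℕ} (hj : j < c) :
    ((bset j).card : ℝ) ≤ Real.logb 2 c := by
  have h : (2:ℕ) ^ (bset j).card ≤ c := by
    have := two_pow_card_le' (bset j)
    rw [bset_sum j] at this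
    omega
  have h2 : ((2:ℝ) ^ (bset j).card : ℝ) ≤ (c : ℝ) := by exact_mod_cast h
  have h3 := Real.logb_le_logb_of_le (b := 2) (by norm_num) (by positivity) h2
  rwa [Real.logb_pow, Real.logb_self_eq_one (by norm_num), mul_one] at h3

theorem stmt_6 (d c : ℕ) (hd : 1 ≤ d) (hc : 1 ≤ c) (hcd : c ≤ 2 ^ (d - 2)) :
    (2 ^ d - 1) / (d : ℝ) - c / (d - Real.logb 2 c) ≤ Wfun (2 ^ (d - 1) - c) := by
  obtain ⟨n, rfl⟩ : ∃ n, d = n + 1 := ⟨d - 1, by omega⟩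
  simp only [Nat.add_sub_cancel]
  have hcn : c ≤ 2 ^ n := le_trans hcd (Nat.pow_le_pow_right (by norm_num) (by omega))
  set g : ℕ → ℝ := fun k => 1 / (((bset k).card : ℝ) + 1) with hg
  set D : ℝ := ((n:ℝ) + 1) - Real.logb 2 c with hD
  have hlogc : Real.logb 2 c ≤ ((n + 1 - 2 : ℕ) : ℝ) := by
    have h2 : (c:ℝ) ≤ (2:ℝ) ^ (n + 1 - 2 : ℕ) := by exact_mod_cast hcd
    have h3 := Real.logb_le_logb_of_le (b := 2) (by norm_num) (by positivity) h2
    rwa [Real.logb_pow, Real.logb_self_eq_one (by norm_num), mul_one] at h3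
  have hpos : (0:ℝ) < D := by
    have h4 : ((n + 1 - 2 : ℕ) : ℝ) < (n:ℝ) + 1 := by
      have : (n + 1 - 2 : ℕ) < n + 1 := by omega
      exact_mod_cast this
    rw [hD]; linarith
  have hbound : ∀ k ∈ Finset.Ico (2^n - c) (2^n), g k ≤ 1 / D := by
    intro k hk
    rw [Finset.mem_Ico] at hk
    obtain ⟨hk1, hk2⟩ := hk
    set j := 2 ^ n - 1 - k with hj
    have hjc : j < c := by omega
    have hpcj : (bset j).card = n - (bset k).card := card_bset_compl hk2
    have hpck : (bset k).card ≤ n := by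
      have := Finset.card_le_card (bset_subset_range hk2)
      simpa using this
    have hlogj : ((bset j).card : ℝ) ≤ Real.logb 2 c := card_bset_le_logb hjc
    have h1 : D ≤ ((bset k).card : ℝ) + 1 := by
      have hcc : ((bset j).card : ℝ) = (n:ℝ) - ((bset k).card : ℝ) := by
        rw [hpcj]; push_cast [Nat.cast_sub hpck]; ring
      rw [hD]; rw [hcc] at hlogj; linarith
    exact one_div_le_one_div_of_le hpos h1
  have htail : ∑ k ∈ Finset.Ico (2^n - c) (2^n), g k ≤ (c : ℝ) / D := by
    calc ∑ k ∈ Finset.Ico (2^n - c) (2^n), g k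
        ≤ (Finset.Ico (2^n - c) (2^n)).card • (1 / D) :=
          Finset.sum_le_card_nsmul _ _ _ hbound
      _ = (c : ℝ) / D := by
          rw [Nat.card_Ico]
          have hcc : 2^n - (2^n - c) = c := by omega
          rw [hcc, nsmul_eq_mul, mul_one_div]
  have hsplit : ∑ k ∈ range (2^n), g k
      = ∑ k ∈ range (2^n - c), g k + ∑ k ∈ Finset.Ico (2^n - c) (2^n), g k := by
    rw [Finset.range_eq_Ico, Finset.range_eq_Ico]
    exact (Finset.sum_Ico_consecutive g (Nat.zero_le _) (Nat.sub_le _ _)).symm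
  have hWfull : ∑ k ∈ range (2^n), g k = (2 ^ (n + 1) - 1) / ((n:ℝ) + 1) := by
    have h := Wfun_two_pow n
    rw [Wfun_eq] at h
    exact h
  have hWm : Wfun (2^n - c) = ∑ k ∈ range (2^n - c), g k := Wfun_eq _
  rw [hWm]
  have hfin : ∑ k ∈ range (2^n - c), g k
      = (2 ^ (n + 1) - 1) / ((n:ℝ) + 1) - ∑ k ∈ Finset.Ico (2^n - c) (2^n), g k := by
    rw [← hWfull, hsplit]; ring
  rw [hfin]
  have hcast1 : ((n + 1 : ℕ) : ℝ) = (n:ℝ) + 1 := by push_cast; ring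
  have hcast2 : ((2:ℝ) ^ (n + 1 : ℕ)) = 2 ^ (n+1) := rfl
  rw [hcast1]
  have : (c:ℝ) / ((n:ℝ) + 1 - Real.logb 2 c) = (c:ℝ) / D := by rw [hD]
  rw [this]
  linarith [htail]
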